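/- Let e = {x,y} be an edge of T, let T_x be the descendant subtree of x with respect to y and T_y the descendant subtree of y with respect to x, with leaf sets L_x and L_y (so L = L_x ∪ L_y). Fix θ̂ ∈ (−1,1)^E. Then for every leaf configuration τ_L ∈ {±1}^L, the leaf marginal of the CFN measure on T factorizes as P_θ̂(σ̂_L = τ_L) = P_θ̂^{T_x}(σ̂_{L_x} = τ_{L_x}) · P_θ̂^{T_y}(σ̂_{L_y} = τ_{L_y}) · (1 + θ̂_e · Z_x^{θ̂,T_x}(τ_{L_x}) · Z_y^{θ̂,T_y}(τ_{L_y})), where P_θ̂^{T_x} and P_θ̂^{T_y} denote the CFN measures on the subtrees T_x and T_y with the restricted parameters. -/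

import Mathlib

open Finset
open scoped Classical

noncomputable section

namespace CFN

variable {V : Type*} [Fintype V] [DecidableEq V]

/-- The `±1` spin attached to a Boolean. -/
def spin (b : Bool) : ℝ := if b then 1 else -1

/-- The product of the spins at the two endpoints of an unordered edge. -/
def edgeSpin (σ : V → Bool) : Sym2 V → ℝ :=
  Sym2.lift ⟨fun x y => spin (σ x) * spin (σ y), fun x y => mul_comm _ _⟩

/-- The CFN weight of a configuration: `(1/2) · ∏_{e={x,y}∈F} (1 + σ_x σ_y θ_e)/2`. -/
def cfnWeight (F : Finset (Sym2 V)) (θ : Sym2 V → ℝ) (σ : V → Bool) : ℝ :=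
  (1 / 2) * ∏ e ∈ F, (1 + edgeSpin σ e * θ e) / 2

/-- The probability of the event `A` under the CFN measure with vertex set `W` and edge
set `F` (the event should only depend on the coordinates in `W`; configurations are
represented as functions on the ambient vertex type, whence the normalizing factor). -/
def cfnProb (W : Finset V) (F : Finset (Sym2 V)) (θ : Sym2 V → ℝ)
    (A : Set (V → Bool)) : ℝ :=
  ((2 : ℝ) ^ W.card / (2 : ℝ) ^ Fintype.card V) *
    ∑ σ : V → Bool, Set.indicator A (cfnWeight F θ) σ

/-- Expectation of `f` under the CFN measure on the full vertex set with edge set `F`. -/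
def cfnExp (F : Finset (Sym2 V)) (θ : Sym2 V → ℝ) (f : (V → Bool) → ℝ) : ℝ :=
  ∑ σ : V → Bool, cfnWeight F θ σ * f σ

/-- The magnetization at `u` for the tree with vertex set `W`, edge set `F`, leaf set
`Lu`, parameter `θ`, and observed leaf configuration `τ`:
`P_θ(σ_u = +1 | σ_{L_u} = τ_{L_u}) − P_θ(σ_u = −1 | σ_{L_u} = τ_{L_u})`. -/
def magnetization (W : Finset V) (F : Finset (Sym2 V)) (θ : Sym2 V → ℝ)
    (u : V) (Lu : Finset V) (τ : V → Bool) : ℝ :=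
  (cfnProb W F θ {η | η u = true ∧ ∀ x ∈ Lu, η x = τ x} -
      cfnProb W F θ {η | η u = false ∧ ∀ x ∈ Lu, η x = τ x}) /
    cfnProb W F θ {η | ∀ x ∈ Lu, η x = τ x}

variable (G : SimpleGraph V) [DecidableRel G.Adj]

/-- The vertex set of the descendant subtree of `u` with respect to `v`: all vertices `w`
whose shortest path to `v` passes through `u`. -/
def descVerts (u v : V) : Finset V :=
  Finset.univ.filter fun w => G.dist w v = G.dist w u + G.dist u v

/-- The edge set of the descendant subtree of `u` with respect to `v`. -/
def descEdges (u v : V) : Finset (Sym2 V) :=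
  G.edgeFinset.filter fun e => ∀ x ∈ e, x ∈ descVerts G u v

/-- The leaf set of the tree `G`. -/
def leaves : Finset V := Finset.univ.filter fun w => G.degree w = 1

/-- The leaf set of the descendant subtree of `u` with respect to `v`. -/
def descLeaves (u v : V) : Finset V :=
  (descVerts G u v).filter fun w => G.degree w = 1

/-- The magnetization at `u` computed on the descendant subtree of `u` with respect to
`v`, with parameters `θ` and leaf data taken from the configuration `τ`. -/
def descMag (u v : V) (θ : Sym2 V → ℝ) (τ : V → Bool) : ℝ :=
  magnetization (descVerts G u v) (descEdges G u v) θ u (descLeaves G u v) τ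

end CFN

set_option linter.unusedSectionVars false

namespace CFNalg
open CFN
variable {V : Type*} [Fintype V] [DecidableEq V]

lemma spin_cases (b : Bool) : spin b = 1 ∨ spin b = -1 := by
  cases b <;> simp [spin]

lemma edgeSpin_mk (σ : V → Bool) (u v : V) :
    edgeSpin σ s(u, v) = spin (σ u) * spin (σ v) := rfl

lemma edgeSpin_cases (σ : V → Bool) (e : Sym2 V) :
    edgeSpin σ e = 1 ∨ edgeSpin σ e = -1 := by
  induction e using Sym2.ind with
  | _ u v =>
    rw [edgeSpin_mk]
    rcases spin_cases (σ u) with h | h <;> rcases spin_cases (σ v) with h' | h' <;>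
      rw [h, h'] <;> norm_num

lemma edgeSpin_congr {σ σ' : V → Bool} {W : Finset V} (e : Sym2 V)
    (he : ∀ z ∈ e, z ∈ W) (h : ∀ v ∈ W, σ v = σ' v) :
    edgeSpin σ e = edgeSpin σ' e := by
  induction e using Sym2.ind with
  | _ u v =>
    rw [edgeSpin_mk, edgeSpin_mk, h u (he u (by simp)), h v (he v (by simp))]

lemma indicator_leaf (L : Finset V) (f : (V → Bool) → ℝ) (σ τ : V → Bool) :
    Set.indicator {η : V → Bool | ∀ z ∈ L, η z = τ z} f σ
      = (if ∀ z ∈ L, σ z = τ z then (1 : ℝ) else 0) * f σ := by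
  rw [Set.indicator_apply]
  by_cases h : ∀ z ∈ L, σ z = τ z <;> simp [h, Set.mem_setOf_eq]

lemma indicator_mag (u : V) (L : Finset V) (f : (V → Bool) → ℝ) (σ τ : V → Bool) :
    Set.indicator {η : V → Bool | η u = true ∧ ∀ z ∈ L, η z = τ z} f σ
      - Set.indicator {η : V → Bool | η u = false ∧ ∀ z ∈ L, η z = τ z} f σ
      = (if ∀ z ∈ L, σ z = τ z then (1 : ℝ) else 0) * f σ * spin (σ u) := by
  rw [Set.indicator_apply, Set.indicator_apply]
  rcases Bool.dichotomy (σ u) with hu | hu <;>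
    by_cases h : ∀ z ∈ L, σ z = τ z <;>
      simp [h, hu, Set.mem_setOf_eq, spin]

lemma edgeProd_pos {G : SimpleGraph V} [DecidableRel G.Adj] {θ : Sym2 V → ℝ}
    (hθ : ∀ e ∈ G.edgeFinset, θ e ∈ Set.Ioo (-1 : ℝ) 1)
    {F : Finset (Sym2 V)} (hF : F ⊆ G.edgeFinset) (σ : V → Bool) :
    0 < ∏ e ∈ F, (1 + edgeSpin σ e * θ e) / 2 := by
  refine Finset.prod_pos fun e he => ?_
  obtain ⟨h1, h2⟩ := hθ e (hF he)
  rcases edgeSpin_cases σ e with h | h <;> rw [h] <;> nlinarith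

lemma if_and_one (P Q : Prop) [Decidable P] [Decidable Q] [Decidable (P ∧ Q)] :
    (if P ∧ Q then (1 : ℝ) else 0) = (if P then (1 : ℝ) else 0) * if Q then (1 : ℝ) else 0 := by
  by_cases hP : P <;> by_cases hQ : Q <;> simp [hP, hQ]

lemma cfnProb_leaf_eq (W : Finset V) (F : Finset (Sym2 V)) (θ : Sym2 V → ℝ)
    (L : Finset V) (τ : V → Bool) :
    cfnProb W F θ {η | ∀ z ∈ L, η z = τ z}
      = ((2 : ℝ) ^ W.card / (2 : ℝ) ^ Fintype.card V) * ((1 / 2) *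
          ∑ σ : V → Bool, (if ∀ z ∈ L, σ z = τ z then (1 : ℝ) else 0)
            * ∏ e ∈ F, (1 + edgeSpin σ e * θ e) / 2) := by
  rw [cfnProb]
  congr 1
  rw [Finset.mul_sum]
  refine Finset.sum_congr rfl fun σ _ => ?_
  rw [indicator_leaf, cfnWeight]
  ring

lemma magnetization_eq (W : Finset V) (F : Finset (Sym2 V)) (θ : Sym2 V → ℝ)
    (u : V) (L : Finset V) (τ : V → Bool) :
    magnetization W F θ u L τ
      = (∑ σ : V → Bool, (if ∀ z ∈ L, σ z = τ z then (1 : ℝ) else 0)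
            * (∏ e ∈ F, (1 + edgeSpin σ e * θ e) / 2) * spin (σ u))
        / ∑ σ : V → Bool, (if ∀ z ∈ L, σ z = τ z then (1 : ℝ) else 0)
            * ∏ e ∈ F, (1 + edgeSpin σ e * θ e) / 2 := by
  rw [magnetization]
  have hnum : cfnProb W F θ {η | η u = true ∧ ∀ x ∈ L, η x = τ x}
      - cfnProb W F θ {η | η u = false ∧ ∀ x ∈ L, η x = τ x}
      = ((2 : ℝ) ^ W.card / (2 : ℝ) ^ Fintype.card V) * ((1 / 2) *
          ∑ σ : V → Bool, (if ∀ z ∈ L, σ z = τ z then (1 : ℝ) else 0)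
            * (∏ e ∈ F, (1 + edgeSpin σ e * θ e) / 2) * spin (σ u)) := by
    rw [cfnProb, cfnProb, ← mul_sub, ← Finset.sum_sub_distrib]
    congr 1
    rw [Finset.mul_sum]
    refine Finset.sum_congr rfl fun σ _ => ?_
    rw [indicator_mag, cfnWeight]
    ring
  rw [hnum, cfnProb_leaf_eq]
  have hk : ((2 : ℝ) ^ W.card / (2 : ℝ) ^ Fintype.card V) * (1 / 2) ≠ 0 := by positivity
  simp only [← mul_assoc]
  rw [mul_div_mul_left _ _ hk]

end CFNalg




namespace CFNaux

variable {V : Type*} [Fintype V] [DecidableEq V]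
variable (G : SimpleGraph V) [DecidableRel G.Adj]

/-- In a tree, every path has length equal to the distance between its endpoints. -/
lemma tree_path_length (hT : G.IsTree) {u v : V} (p : G.Walk u v) (hp : p.IsPath) :
    p.length = G.dist u v := by
  obtain ⟨q, hq, hql⟩ := hT.isConnected.exists_path_of_dist u v
  rw [(hT.existsUnique_path u v).unique hp hq]
  exact hql

/-- Splitting a path at an interior vertex splits the distance. -/
lemma tree_dist_split (hT : G.IsTree) {u v w : V} (p : G.Walk u v) (hp : p.IsPath)
    (hw : w ∈ p.support) : G.dist u v = G.dist u w + G.dist w v := by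
  have h1 := tree_path_length G hT _ (hp.takeUntil hw)
  have h2 := tree_path_length G hT _ (hp.dropUntil hw)
  have h3 := tree_path_length G hT p hp
  have := congrArg SimpleGraph.Walk.length (p.take_spec hw)
  rw [SimpleGraph.Walk.length_append] at this
  omega

lemma dist_dichotomy (hT : G.IsTree) {x y : V} (hxy : G.Adj x y) (w : V) :
    G.dist w y = G.dist w x + 1 ∨ G.dist w x = G.dist w y + 1 := by
  obtain ⟨p, hp, hpl⟩ := hT.isConnected.exists_path_of_dist w x
  by_cases hy : y ∈ p.support
  · right
    have := tree_dist_split G hT p hp hy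
    have h1 : G.dist y x = 1 := SimpleGraph.dist_eq_one_iff_adj.mpr hxy.symm
    omega
  · left
    have hpath : (p.concat hxy).IsPath := by
      rw [SimpleGraph.Walk.isPath_def, SimpleGraph.Walk.support_concat]
      have := (SimpleGraph.Walk.isPath_def p).mp hp
      simp [List.nodup_append, this, hy]
      exact fun a ha h => hy (h ▸ ha)
    have := tree_path_length G hT _ hpath
    rw [SimpleGraph.Walk.length_concat] at this
    omega

end CFNaux

namespace CFNaux

variable {V : Type*} [Fintype V] [DecidableEq V]
variable (G : SimpleGraph V) [DecidableRel G.Adj]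

/-- Auxiliary: a cross edge between the two sides of the split must be the edge `{x,y}`
itself; here we conclude `v = y`. -/
lemma cross_aux (hT : G.IsTree) {x y u v : V} (hxy : G.Adj x y) (huv : G.Adj u v)
    (hu : G.dist u y = G.dist u x + 1) (hv : G.dist v x = G.dist v y + 1) :
    v = y := by
  have hconn := hT.isConnected
  have hduv : G.dist u v = 1 := SimpleGraph.dist_eq_one_iff_adj.mpr huv
  have hdvu : G.dist v u = 1 := SimpleGraph.dist_eq_one_iff_adj.mpr huv.symm
  -- a = b
  have htri1 := hconn.dist_triangle (u := u) (v := v) (w := y)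
  have htri2 := hconn.dist_triangle (u := v) (v := u) (w := x)
  have hab : G.dist u x = G.dist v y := by omega
  obtain ⟨p, hp, hpl⟩ := hconn.exists_path_of_dist u x
  -- v is not on the path from u to x
  have hvp : v ∉ p.support := by
    intro hmem
    have := tree_dist_split G hT p hp hmem
    have huvpos : G.dist u v ≠ 0 := by omega
    omega
  -- y is not on the path from u to x
  have hyp : y ∉ p.support := by
    intro hmem
    have := tree_dist_split G hT p hp hmem
    have h1 : G.dist y x = 1 := SimpleGraph.dist_eq_one_iff_adj.mpr hxy.symm
    omega
  -- first path from u to y : p followed by the edge x-y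
  have hw1 : (p.concat hxy).IsPath := by
    rw [SimpleGraph.Walk.isPath_def, SimpleGraph.Walk.support_concat]
    have := (SimpleGraph.Walk.isPath_def p).mp hp
    simp [List.nodup_append, this, hyp]
    exact fun a ha h => hyp (h ▸ ha)
  -- second path from u to y : edge u-v followed by a path from v to y
  obtain ⟨r, hr, hrl⟩ := hconn.exists_path_of_dist v y
  have hur : u ∉ r.support := by
    intro hmem
    have := tree_dist_split G hT r hr hmem
    omega
  have hw2 : (SimpleGraph.Walk.cons huv r).IsPath := hr.cons hur
  have heq : p.concat hxy = SimpleGraph.Walk.cons huv r :=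
    (hT.existsUnique_path u y).unique hw1 hw2
  have hvsup : v ∈ (p.concat hxy).support := by
    rw [heq]
    simp [SimpleGraph.Walk.support_cons, r.start_mem_support]
  rw [SimpleGraph.Walk.support_concat, List.mem_append] at hvsup
  rcases hvsup with h | h
  · exact absurd h hvp
  · simpa using h

end CFNaux


namespace CFNaux

variable {V : Type*} [Fintype V] [DecidableEq V]

/-- Merge equiv for splitting configurations along a finset. -/
def mergeEquiv (S : Finset V) :
    ((∀ _ : {v // v ∈ S}, Bool) × (∀ _ : {v // v ∉ S}, Bool)) ≃ (V → Bool) where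
  toFun p v := if h : v ∈ S then p.1 ⟨v, h⟩ else p.2 ⟨v, h⟩
  invFun σ := (fun v => σ v.1, fun v => σ v.1)
  left_inv p := by
    ext v
    · simp [v.2]
    · simp [v.2]
  right_inv σ := by
    funext v
    by_cases h : v ∈ S <;> simp [h]

lemma sum_factor (S : Finset V) (F G : (V → Bool) → ℝ)
    (hF : ∀ σ σ' : V → Bool, (∀ v ∈ S, σ v = σ' v) → F σ = F σ')
    (hG : ∀ σ σ' : V → Bool, (∀ v ∉ S, σ v = σ' v) → G σ = G σ') :
    (∑ σ : V → Bool, F σ) * ∑ σ : V → Bool, G σ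
      = 2 ^ Fintype.card V * ∑ σ : V → Bool, F σ * G σ := by
  classical
  have key : ∀ H : (V → Bool) → ℝ, (∑ σ : V → Bool, H σ)
      = ∑ a : {v // v ∈ S} → Bool, ∑ b : {v // v ∉ S} → Bool, H (mergeEquiv S (a, b)) := by
    intro H
    rw [← Equiv.sum_comp (mergeEquiv S) H, Fintype.sum_prod_type]
  have hFab : ∀ a b, F (mergeEquiv S (a, b)) = F (mergeEquiv S (a, fun _ => false)) := by
    intro a b
    apply hF
    intro v hv
    simp [mergeEquiv, hv]
  have hGab : ∀ a b, G (mergeEquiv S (a, b)) = G (mergeEquiv S (fun _ => false, b)) := by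
    intro a b
    apply hG
    intro v hv
    simp [mergeEquiv, hv]
  have cardS : Fintype.card ({v // v ∈ S} → Bool) = 2 ^ S.card := by
    simp [Fintype.card_fun]
  have cardSc : Fintype.card ({v // v ∉ S} → Bool) = 2 ^ (Sᶜ.card) := by
    simp [Fintype.card_fun, Fintype.card_subtype_compl, Finset.card_compl]
  have hFsum : (∑ σ : V → Bool, F σ)
      = 2 ^ (Sᶜ.card) * ∑ a : {v // v ∈ S} → Bool, F (mergeEquiv S (a, fun _ => false)) := by
    rw [key F]
    rw [Finset.mul_sum]
    refine Finset.sum_congr rfl fun a _ => ?_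
    rw [Finset.sum_congr rfl fun b _ => hFab a b, Finset.sum_const, Finset.card_univ, cardSc,
      nsmul_eq_mul]
    push_cast
    ring
  have hGsum : (∑ σ : V → Bool, G σ)
      = 2 ^ (S.card) * ∑ b : {v // v ∉ S} → Bool, G (mergeEquiv S (fun _ => false, b)) := by
    rw [key G, Finset.sum_comm]
    rw [Finset.mul_sum]
    refine Finset.sum_congr rfl fun b _ => ?_
    rw [Finset.sum_congr rfl fun a _ => hGab a b, Finset.sum_const, Finset.card_univ, cardS,
      nsmul_eq_mul]
    push_cast
    ring
  have hFGsum : (∑ σ : V → Bool, F σ * G σ)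
      = (∑ a : {v // v ∈ S} → Bool, F (mergeEquiv S (a, fun _ => false)))
        * ∑ b : {v // v ∉ S} → Bool, G (mergeEquiv S (fun _ => false, b)) := by
    rw [key (fun σ => F σ * G σ), Finset.sum_mul_sum]
    refine Finset.sum_congr rfl fun a _ => Finset.sum_congr rfl fun b _ => ?_
    rw [hFab a b, hGab a b]
  have hcards : S.card + Sᶜ.card = Fintype.card V := by
    rw [Finset.card_compl]
    have := Finset.card_le_univ S
    omega
  rw [hFsum, hGsum, hFGsum, ← hcards]
  push_cast
  ring

end CFNaux

namespace CFNaux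

variable {V : Type*} [Fintype V] [DecidableEq V]
variable (G : SimpleGraph V) [DecidableRel G.Adj]

lemma mem_descVerts {x y w : V} :
    w ∈ CFN.descVerts G x y ↔ G.dist w y = G.dist w x + G.dist x y := by
  simp [CFN.descVerts]

lemma descVerts_compl (hT : G.IsTree) {x y : V} (hxy : G.Adj x y) :
    CFN.descVerts G y x = (CFN.descVerts G x y)ᶜ := by
  have h1 : G.dist x y = 1 := SimpleGraph.dist_eq_one_iff_adj.mpr hxy
  have h2 : G.dist y x = 1 := SimpleGraph.dist_eq_one_iff_adj.mpr hxy.symm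
  ext w
  rw [Finset.mem_compl, mem_descVerts, mem_descVerts, h1, h2]
  have := dist_dichotomy G hT hxy w
  omega

lemma x_mem_descVerts {x y : V} (hxy : G.Adj x y) : x ∈ CFN.descVerts G x y := by
  rw [mem_descVerts, SimpleGraph.dist_self]
  have h2 : G.dist x y = 1 := SimpleGraph.dist_eq_one_iff_adj.mpr hxy
  omega

lemma y_not_mem_descVerts {x y : V} (hxy : G.Adj x y) : y ∉ CFN.descVerts G x y := by
  rw [mem_descVerts, SimpleGraph.dist_self]
  have h1 : G.dist x y = 1 := SimpleGraph.dist_eq_one_iff_adj.mpr hxy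
  have h2 : G.dist y x = 1 := SimpleGraph.dist_eq_one_iff_adj.mpr hxy.symm
  omega

lemma edge_split (hT : G.IsTree) {x y : V} (hxy : G.Adj x y) :
    G.edgeFinset = insert s(x, y) (CFN.descEdges G x y ∪ CFN.descEdges G y x) := by
  have h1 : G.dist x y = 1 := SimpleGraph.dist_eq_one_iff_adj.mpr hxy
  have h2 : G.dist y x = 1 := SimpleGraph.dist_eq_one_iff_adj.mpr hxy.symm
  ext e
  constructor
  · intro he
    induction e using Sym2.ind with
    | _ u v =>
      have huv : G.Adj u v := by rwa [SimpleGraph.mem_edgeFinset, SimpleGraph.mem_edgeSet] at he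
      rcases dist_dichotomy G hT hxy u with hu | hu <;>
        rcases dist_dichotomy G hT hxy v with hv | hv
      · -- both in Vx
        refine Finset.mem_insert_of_mem (Finset.mem_union_left _ ?_)
        rw [CFN.descEdges, Finset.mem_filter]
        refine ⟨he, ?_⟩
        intro z hz
        rw [Sym2.mem_iff] at hz
        rw [mem_descVerts, h1]
        rcases hz with rfl | rfl <;> omega
      · -- u in Vx, v in Vy : must be the edge x y
        have hvy : v = y := cross_aux G hT hxy huv (by omega) (by omega)
        have hux : u = x := cross_aux G hT hxy.symm huv.symm (by omega) (by omega)
        subst hvy; subst hux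
        exact Finset.mem_insert_self _ _
      · -- u in Vy, v in Vx
        have huy : u = y := cross_aux G hT hxy huv.symm (by omega) (by omega)
        have hvx : v = x := cross_aux G hT hxy.symm huv (by omega) (by omega)
        subst huy; subst hvx
        rw [Sym2.eq_swap]
        exact Finset.mem_insert_self _ _
      · -- both in Vy
        refine Finset.mem_insert_of_mem (Finset.mem_union_right _ ?_)
        rw [CFN.descEdges, Finset.mem_filter]
        refine ⟨he, ?_⟩
        intro z hz
        rw [Sym2.mem_iff] at hz
        rw [mem_descVerts, h2]
        rcases hz with rfl | rfl <;> omega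
  · intro he
    rcases Finset.mem_insert.mp he with rfl | he'
    · rwa [SimpleGraph.mem_edgeFinset, SimpleGraph.mem_edgeSet]
    · rcases Finset.mem_union.mp he' with h | h <;>
        exact (Finset.mem_filter.mp h).1

lemma edge_not_mem_descEdges (hT : G.IsTree) {x y : V} (hxy : G.Adj x y) :
    s(x, y) ∉ CFN.descEdges G x y ∪ CFN.descEdges G y x := by
  intro h
  rcases Finset.mem_union.mp h with h | h
  · have := (Finset.mem_filter.mp h).2 y (by simp)
    exact y_not_mem_descVerts G hxy this
  · have := (Finset.mem_filter.mp h).2 x (by simp)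
    exact y_not_mem_descVerts G hxy.symm this

lemma descEdges_disjoint (hT : G.IsTree) {x y : V} (hxy : G.Adj x y) :
    Disjoint (CFN.descEdges G x y) (CFN.descEdges G y x) := by
  rw [Finset.disjoint_left]
  intro e he he'
  induction e using Sym2.ind with
  | _ u v =>
    have h1 := (Finset.mem_filter.mp he).2 u (by simp)
    have h2 := (Finset.mem_filter.mp he').2 u (by simp)
    rw [descVerts_compl G hT hxy, Finset.mem_compl] at h2
    exact h2 h1

lemma descEdges_subset {x y : V} : CFN.descEdges G x y ⊆ G.edgeFinset :=
  Finset.filter_subset _ _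

lemma leaves_split (hT : G.IsTree) {x y : V} (hxy : G.Adj x y) :
    CFN.leaves G = CFN.descLeaves G x y ∪ CFN.descLeaves G y x := by
  rw [CFN.leaves, CFN.descLeaves, CFN.descLeaves, ← Finset.filter_union,
    descVerts_compl G hT hxy, Finset.union_compl]

lemma descLeaves_subset {x y : V} : CFN.descLeaves G x y ⊆ CFN.descVerts G x y :=
  Finset.filter_subset _ _

lemma card_descVerts (hT : G.IsTree) {x y : V} (hxy : G.Adj x y) :
    (CFN.descVerts G x y).card + (CFN.descVerts G y x).card = Fintype.card V := by
  rw [descVerts_compl G hT hxy, Finset.card_compl]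
  have := Finset.card_le_univ (CFN.descVerts G x y)
  omega

end CFNaux

/-- **Lemma (factorization of the leaf marginal across an edge).**
For an edge `e = {x,y}` of the tree and any leaf configuration `τ`:
`P_θ̂(σ_L = τ_L) = P_θ̂^{T_x}(σ_{L_x} = τ_{L_x}) · P_θ̂^{T_y}(σ_{L_y} = τ_{L_y}) ·
(1 + θ̂_e · Z_x^{θ̂,T_x}(τ_{L_x}) · Z_y^{θ̂,T_y}(τ_{L_y}))`. -/
theorem leaf_marginal_factorization
    {V : Type*} [Fintype V] [DecidableEq V] (G : SimpleGraph V) [DecidableRel G.Adj]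
    (hT : G.IsTree) (hbin : ∀ w : V, G.degree w = 1 ∨ G.degree w = 3)
    (x y : V) (hxy : G.Adj x y)
    (θh : Sym2 V → ℝ) (hθh : ∀ e ∈ G.edgeFinset, θh e ∈ Set.Ioo (-1 : ℝ) 1)
    (τ : V → Bool) :
    CFN.cfnProb Finset.univ G.edgeFinset θh {η | ∀ z ∈ CFN.leaves G, η z = τ z} =
      CFN.cfnProb (CFN.descVerts G x y) (CFN.descEdges G x y) θh
          {η | ∀ z ∈ CFN.descLeaves G x y, η z = τ z} *
        CFN.cfnProb (CFN.descVerts G y x) (CFN.descEdges G y x) θh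
          {η | ∀ z ∈ CFN.descLeaves G y x, η z = τ z} *
        (1 + θh s(x, y) * CFN.descMag G x y θh τ * CFN.descMag G y x θh τ) := by
  classical
  set n := Fintype.card V with hn
  have hVc : CFN.descVerts G y x = (CFN.descVerts G x y)ᶜ := CFNaux.descVerts_compl G hT hxy
  have hcard : (CFN.descVerts G x y).card + (CFN.descVerts G y x).card = n :=
    CFNaux.card_descVerts G hT hxy
  have hE := CFNaux.edge_split G hT hxy
  have hnot := CFNaux.edge_not_mem_descEdges G hT hxy
  have hdisj := CFNaux.descEdges_disjoint G hT hxy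
  have hLsplit := CFNaux.leaves_split G hT hxy
  set Vx := CFN.descVerts G x y with hVx
  set Vy := CFN.descVerts G y x with hVy
  set Fx := CFN.descEdges G x y with hFxd
  set Fy := CFN.descEdges G y x with hFyd
  set Lx := CFN.descLeaves G x y with hLxd
  set Ly := CFN.descLeaves G y x with hLyd
  set θe := θh s(x, y) with hθed
  set Px : (V → Bool) → ℝ := fun σ => ∏ e ∈ Fx, (1 + CFN.edgeSpin σ e * θh e) / 2 with hPxdef
  set Py : (V → Bool) → ℝ := fun σ => ∏ e ∈ Fy, (1 + CFN.edgeSpin σ e * θh e) / 2 with hPydef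
  set Ix : (V → Bool) → ℝ := fun σ => if ∀ z ∈ Lx, σ z = τ z then 1 else 0 with hIxdef
  set Iy : (V → Bool) → ℝ := fun σ => if ∀ z ∈ Ly, σ z = τ z then 1 else 0 with hIydef
  set fx : (V → Bool) → ℝ := fun σ => Ix σ * Px σ with hfxdef
  set fy : (V → Bool) → ℝ := fun σ => Iy σ * Py σ with hfydef
  set gx : (V → Bool) → ℝ := fun σ => fx σ * CFN.spin (σ x) with hgxdef
  set gy : (V → Bool) → ℝ := fun σ => fy σ * CFN.spin (σ y) with hgydef
  set Sx := ∑ σ : V → Bool, fx σ with hSxdef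
  set Sy := ∑ σ : V → Bool, fy σ with hSydef
  set Mx := ∑ σ : V → Bool, gx σ with hMxdef
  set My := ∑ σ : V → Bool, gy σ with hMydef
  have hFxE : Fx ⊆ G.edgeFinset := CFNaux.descEdges_subset G
  have hFyE : Fy ⊆ G.edgeFinset := CFNaux.descEdges_subset G
  have hPxpos : ∀ σ, 0 < Px σ := fun σ => CFNalg.edgeProd_pos hθh hFxE σ
  have hPypos : ∀ σ, 0 < Py σ := fun σ => CFNalg.edgeProd_pos hθh hFyE σ
  have hIxnn : ∀ σ, 0 ≤ Ix σ := by
    intro σ; rw [hIxdef]; dsimp only; split <;> norm_num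
  have hIynn : ∀ σ, 0 ≤ Iy σ := by
    intro σ; rw [hIydef]; dsimp only; split <;> norm_num
  have hSxpos : 0 < Sx := by
    refine Finset.sum_pos' (fun σ _ => mul_nonneg (hIxnn σ) (hPxpos σ).le)
      ⟨τ, Finset.mem_univ τ, ?_⟩
    have : Ix τ = 1 := by rw [hIxdef]; simp
    rw [hfxdef]; dsimp only; rw [this, one_mul]; exact hPxpos τ
  have hSypos : 0 < Sy := by
    refine Finset.sum_pos' (fun σ _ => mul_nonneg (hIynn σ) (hPypos σ).le)
      ⟨τ, Finset.mem_univ τ, ?_⟩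
    have : Iy τ = 1 := by rw [hIydef]; simp
    rw [hfydef]; dsimp only; rw [this, one_mul]; exact hPypos τ
  -- dependence on coordinates
  have hLxVx : Lx ⊆ Vx := CFNaux.descLeaves_subset G
  have hLyVy : Ly ⊆ Vy := CFNaux.descLeaves_subset G
  have hxVx : x ∈ Vx := CFNaux.x_mem_descVerts G hxy
  have hyVy : y ∈ Vy := CFNaux.x_mem_descVerts G hxy.symm
  have hIxdep : ∀ σ σ' : V → Bool, (∀ v ∈ Vx, σ v = σ' v) → Ix σ = Ix σ' := by
    intro σ σ' h
    rw [hIxdef]; dsimp only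
    refine if_congr ?_ rfl rfl
    constructor <;> intro hh z hz
    · rw [← h z (hLxVx hz)]; exact hh z hz
    · rw [h z (hLxVx hz)]; exact hh z hz
  have hIydep : ∀ σ σ' : V → Bool, (∀ v ∉ Vx, σ v = σ' v) → Iy σ = Iy σ' := by
    intro σ σ' h
    rw [hIydef]; dsimp only
    refine if_congr ?_ rfl rfl
    have h' : ∀ z ∈ Ly, σ z = σ' z := by
      intro z hz
      refine h z ?_
      have := hLyVy hz
      rw [hVc, Finset.mem_compl] at this
      exact this
    constructor <;> intro hh z hz
    · rw [← h' z hz]; exact hh z hz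
    · rw [h' z hz]; exact hh z hz
  have hPxdep : ∀ σ σ' : V → Bool, (∀ v ∈ Vx, σ v = σ' v) → Px σ = Px σ' := by
    intro σ σ' h
    rw [hPxdef]; dsimp only
    refine Finset.prod_congr rfl fun e he => ?_
    rw [CFNalg.edgeSpin_congr e (Finset.mem_filter.mp he).2 h]
  have hPydep : ∀ σ σ' : V → Bool, (∀ v ∉ Vx, σ v = σ' v) → Py σ = Py σ' := by
    intro σ σ' h
    rw [hPydef]; dsimp only
    refine Finset.prod_congr rfl fun e he => ?_
    refine congrArg (fun t => (1 + t * θh e) / 2) ?_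
    induction e using Sym2.ind with
    | _ u v =>
      have hmem := (Finset.mem_filter.mp he).2
      have hu : u ∉ Vx := by
        have := hmem u (by simp); rw [← hVy, hVc, Finset.mem_compl] at this; exact this
      have hv : v ∉ Vx := by
        have := hmem v (by simp); rw [← hVy, hVc, Finset.mem_compl] at this; exact this
      rw [CFNalg.edgeSpin_mk, CFNalg.edgeSpin_mk, h u hu, h v hv]
  have hfxdep : ∀ σ σ' : V → Bool, (∀ v ∈ Vx, σ v = σ' v) → fx σ = fx σ' := by
    intro σ σ' h; rw [hfxdef]; dsimp only; rw [hIxdep σ σ' h, hPxdep σ σ' h]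
  have hfydep : ∀ σ σ' : V → Bool, (∀ v ∉ Vx, σ v = σ' v) → fy σ = fy σ' := by
    intro σ σ' h; rw [hfydef]; dsimp only; rw [hIydep σ σ' h, hPydep σ σ' h]
  have hgxdep : ∀ σ σ' : V → Bool, (∀ v ∈ Vx, σ v = σ' v) → gx σ = gx σ' := by
    intro σ σ' h; rw [hgxdef]; dsimp only; rw [hfxdep σ σ' h, h x hxVx]
  have hgydep : ∀ σ σ' : V → Bool, (∀ v ∉ Vx, σ v = σ' v) → gy σ = gy σ' := by
    intro σ σ' h
    have hy' : y ∉ Vx := by rw [hVc, Finset.mem_compl] at hyVy; exact hyVy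
    rw [hgydef]; dsimp only; rw [hfydep σ σ' h, h y hy']
  have key1 : Sx * Sy = 2 ^ n * ∑ σ : V → Bool, fx σ * fy σ :=
    CFNaux.sum_factor Vx fx fy hfxdep hfydep
  have key2 : Mx * My = 2 ^ n * ∑ σ : V → Bool, gx σ * gy σ :=
    CFNaux.sum_factor Vx gx gy hgxdep hgydep
  have h2n : (2 : ℝ) ^ n ≠ 0 := by positivity
  -- left-hand side
  have hLHS : CFN.cfnProb Finset.univ G.edgeFinset θh {η | ∀ z ∈ CFN.leaves G, η z = τ z}
      = (1 / 4) * (∑ σ : V → Bool, fx σ * fy σ)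
        + (θe / 4) * ∑ σ : V → Bool, gx σ * gy σ := by
    rw [CFN.cfnProb, Finset.card_univ, ← hn, div_self h2n, one_mul,
      Finset.mul_sum, Finset.mul_sum, ← Finset.sum_add_distrib]
    refine Finset.sum_congr rfl fun σ _ => ?_
    rw [CFNalg.indicator_leaf, CFN.cfnWeight, hE, Finset.prod_insert hnot,
      Finset.prod_union hdisj]
    have hsplit : (if ∀ z ∈ CFN.leaves G, σ z = τ z then (1 : ℝ) else 0)
        = Ix σ * Iy σ := by
      have hiff : (∀ z ∈ CFN.leaves G, σ z = τ z)
          ↔ (∀ z ∈ Lx, σ z = τ z) ∧ (∀ z ∈ Ly, σ z = τ z) := by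
        rw [hLsplit]; exact Finset.forall_mem_union
      rw [if_congr hiff rfl rfl, CFNalg.if_and_one]
    rw [hsplit, CFNalg.edgeSpin_mk]
    simp only [hfxdef, hfydef, hgxdef, hgydef, hPxdef, hPydef, hθed]
    ring
  -- right-hand side pieces
  have hSx' : Sx = ∑ σ : V → Bool, (if ∀ z ∈ Lx, σ z = τ z then (1 : ℝ) else 0)
      * ∏ e ∈ Fx, (1 + CFN.edgeSpin σ e * θh e) / 2 := rfl
  have hSy' : Sy = ∑ σ : V → Bool, (if ∀ z ∈ Ly, σ z = τ z then (1 : ℝ) else 0)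
      * ∏ e ∈ Fy, (1 + CFN.edgeSpin σ e * θh e) / 2 := rfl
  have hprobx : CFN.cfnProb Vx Fx θh {η | ∀ z ∈ Lx, η z = τ z}
      = ((2 : ℝ) ^ Vx.card / (2 : ℝ) ^ n) * ((1 / 2) * Sx) := by
    rw [CFNalg.cfnProb_leaf_eq, ← hn, ← hSx']
  have hproby : CFN.cfnProb Vy Fy θh {η | ∀ z ∈ Ly, η z = τ z}
      = ((2 : ℝ) ^ Vy.card / (2 : ℝ) ^ n) * ((1 / 2) * Sy) := by
    rw [CFNalg.cfnProb_leaf_eq, ← hn, ← hSy']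
  have hmagx : CFN.descMag G x y θh τ = Mx / Sx := by
    rw [CFN.descMag, CFNalg.magnetization_eq]
  have hmagy : CFN.descMag G y x θh τ = My / Sy := by
    rw [CFN.descMag, CFNalg.magnetization_eq]
  rw [hLHS, hprobx, hproby, hmagx, hmagy]
  have hSx0 : Sx ≠ 0 := ne_of_gt hSxpos
  have hSy0 : Sy ≠ 0 := ne_of_gt hSypos
  have hpow : (2 : ℝ) ^ Vx.card * 2 ^ Vy.card = 2 ^ n := by
    rw [← pow_add, hcard]
  have e1 : ∑ σ : V → Bool, fx σ * fy σ = Sx * Sy / 2 ^ n := by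
    rw [key1]; field_simp
  have e2 : ∑ σ : V → Bool, gx σ * gy σ = Mx * My / 2 ^ n := by
    rw [key2]; field_simp
  rw [e1, e2]
  field_simp
  linear_combination (-(Sx * Sy * 4) - θe * Mx * My * 4) * hpow
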